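/- arXiv:2403.04841 — 2 statements merged into one kernel-verified Lean document; each statement's English description precedes it below -/
import Mathlib

section
/- Let n, q, m be natural numbers with q ≤ n. For each i ∈ Fin m, let C_i ⊆ Fin n with |C_i| ≤ q, let h_i be a PSD matrix indexed by (C_i → Fin 2), and let H_i be the (Fin n → Fin 2)-indexed matrix that is C_i-local with local part h_i. Let H = Σ_{i ∈ Fin m} H_i and suppose H ≼ I. Then there exist matrices H'₁, …, H'_m, indices j(i), k(i) ∈ Fin m and reals c_i, d_i ≥ 0 such that: (i) H'_i = c_i · H_{j(i)} + d_i · H_{k(i)} for every i (hence each H'_i is PSD and is (C_{j(i)} ∪ C_{k(i)})-local, i.e. acts on at most 2q qubits); (ii) ‖H'_i‖ ≤ 1 for every i; and (iii) (1/m) · Σ_{i ∈ Fin m} H'_i = 2^{−(q+3)} · H. In particular, writing H' = (1/m) Σ_i H'_i, if the smallest eigenvalue of H is at most a then the smallest eigenvalue of H' is at most a/2^{q+3}, and if it is at least b then that of H' is at least b/2^{q+3}. -/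
open Matrix
open scoped Matrix.Norms.L2Operator ComplexOrder

section Helpers

open scoped MatrixOrder in
lemma posSemidef_iff_eq_transpose_mul_self {ν : Type*} [Fintype ν] [DecidableEq ν]
    {A : Matrix ν ν ℂ} : A.PosSemidef ↔ ∃ B : Matrix ν ν ℂ, A = Bᴴ * B := by
  refine ⟨fun hA => ?_, ?_⟩
  · obtain ⟨B, hB⟩ := CStarAlgebra.nonneg_iff_eq_star_mul_self.mp hA.nonneg
    exact ⟨B, hB⟩
  · rintro ⟨B, rfl⟩
    exact posSemidef_conjTranspose_mul_self B

lemma psd_diag_nonneg {ν : Type*} [Fintype ν] [DecidableEq ν] {A : Matrix ν ν ℂ}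
    (hA : A.PosSemidef) (i : ν) : 0 ≤ A i i := by
  have := hA.dotProduct_mulVec_nonneg (Pi.single i 1)
  simpa [Matrix.mulVec_single, dotProduct, Pi.single_apply, apply_ite,
    Finset.sum_ite_eq'] using this

lemma psd_trace_im {ν : Type*} [Fintype ν] [DecidableEq ν] {A : Matrix ν ν ℂ}
    (hA : A.PosSemidef) : A.trace = ((A.trace.re : ℝ) : ℂ) ∧ 0 ≤ A.trace.re := by
  have hd : ∀ i, 0 ≤ (A i i).re ∧ (A i i).im = 0 := by
    intro i
    have := psd_diag_nonneg hA i
    rw [Complex.le_def] at this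
    simpa using ⟨this.1, this.2.symm⟩
  have him : A.trace.im = 0 := by
    simp [Matrix.trace, Matrix.diag, Complex.im_sum, (fun i => (hd i).2)]
  have hre : 0 ≤ A.trace.re := by
    rw [Matrix.trace, Complex.re_sum]
    exact Finset.sum_nonneg fun i _ => (hd i).1
  exact ⟨Complex.ext (by simp) (by simp [him]), hre⟩

lemma cs_row {ν : Type*} [Fintype ν] (a x : ν → ℂ) :
    Complex.normSq (∑ j, a j * x j) ≤
      (∑ j, Complex.normSq (a j)) * (∑ j, Complex.normSq (x j)) := by
  have h1 : ‖∑ j, a j * x j‖ ≤ ∑ j, ‖a j‖ * ‖x j‖ := by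
    refine le_trans (norm_sum_le _ _) ?_
    simp [norm_mul]
  have h2 : (∑ j, ‖a j‖ * ‖x j‖) ^ 2 ≤
      (∑ j, ‖a j‖ ^ 2) * (∑ j, ‖x j‖ ^ 2) :=
    Finset.sum_mul_sq_le_sq_mul_sq _ _ _
  calc Complex.normSq (∑ j, a j * x j) = ‖∑ j, a j * x j‖ ^ 2 :=
        (Complex.sq_norm _).symm
    _ ≤ (∑ j, ‖a j‖ * ‖x j‖) ^ 2 := by
        apply pow_le_pow_left₀ (norm_nonneg _) h1
    _ ≤ (∑ j, ‖a j‖ ^ 2) * (∑ j, ‖x j‖ ^ 2) := h2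
    _ = (∑ j, Complex.normSq (a j)) * (∑ j, Complex.normSq (x j)) := by
        simp [Complex.sq_norm]

lemma psd_trace_smul_one_sub {ν : Type*} [Fintype ν] [DecidableEq ν] {A : Matrix ν ν ℂ}
    (hA : A.PosSemidef) : (((A.trace.re : ℝ) : ℂ) • 1 - A).PosSemidef := by
  obtain ⟨B, hB⟩ := posSemidef_iff_eq_transpose_mul_self.mp hA
  set c : ℝ := A.trace.re with hc
  have hctr : c = ∑ j, ∑ i, Complex.normSq (B i j) := by
    rw [hc, hB, Matrix.trace, Complex.re_sum]
    refine Finset.sum_congr rfl fun j _ => ?_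
    simp only [Matrix.diag, Matrix.mul_apply, Matrix.conjTranspose_apply, Complex.re_sum]
    refine Finset.sum_congr rfl fun i _ => ?_
    simp [Complex.normSq_apply, Complex.mul_re]
  refine Matrix.PosSemidef.of_dotProduct_mulVec_nonneg ?_ ?_
  · show _ = _
    rw [Matrix.conjTranspose_sub, Matrix.conjTranspose_smul, Matrix.conjTranspose_one, hA.1]
    simp
  · intro x
    have hxx : star x ⬝ᵥ x = ((∑ j, Complex.normSq (x j) : ℝ) : ℂ) := by
      simp only [dotProduct, Pi.star_apply]
      push_cast
      refine Finset.sum_congr rfl fun j _ => ?_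
      rw [Complex.normSq_eq_conj_mul_self]
      simp
    have hAx : star x ⬝ᵥ A *ᵥ x = ((∑ i, Complex.normSq ((B *ᵥ x) i) : ℝ) : ℂ) := by
      rw [hB, ← mulVec_mulVec, dotProduct_mulVec, vecMul_conjTranspose, star_star]
      simp only [dotProduct, Pi.star_apply]
      push_cast
      refine Finset.sum_congr rfl fun i _ => ?_
      rw [Complex.normSq_eq_conj_mul_self]
      simp
    have hz : star x ⬝ᵥ (((c : ℂ) • 1 - A) *ᵥ x) =
        (((c * ∑ j, Complex.normSq (x j)) - ∑ i, Complex.normSq ((B *ᵥ x) i) : ℝ) : ℂ) := by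
      rw [Matrix.sub_mulVec, dotProduct_sub, hAx, Matrix.smul_mulVec,
        Matrix.one_mulVec, dotProduct_smul, smul_eq_mul, hxx]
      push_cast
      ring
    rw [hz, Complex.zero_le_real, sub_nonneg, hctr, Finset.sum_mul]
    have swap : ∑ j, (∑ i, Complex.normSq (B i j)) * (∑ j, Complex.normSq (x j)) =
        ∑ i, (∑ j, Complex.normSq (B i j)) * (∑ j, Complex.normSq (x j)) := by
      rw [← Finset.sum_mul, ← Finset.sum_mul, Finset.sum_comm]
    rw [swap]
    refine Finset.sum_le_sum fun i _ => ?_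
    simpa [Matrix.mulVec, dotProduct] using cs_row (fun j => B i j) x

lemma quad_bound {ν : Type*} [Fintype ν] [DecidableEq ν] {B : Matrix ν ν ℂ} {c : ℝ}
    (hc : (((c : ℝ) : ℂ) • 1 - Bᴴ * B).PosSemidef) (v : ν → ℂ) :
    ∑ i, Complex.normSq ((B *ᵥ v) i) ≤ c * ∑ j, Complex.normSq (v j) := by
  have hxx : star v ⬝ᵥ v = ((∑ j, Complex.normSq (v j) : ℝ) : ℂ) := by
    simp only [dotProduct, Pi.star_apply]
    push_cast
    refine Finset.sum_congr rfl fun j _ => ?_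
    rw [Complex.normSq_eq_conj_mul_self]
    simp
  have hAx : star v ⬝ᵥ (Bᴴ * B) *ᵥ v = ((∑ i, Complex.normSq ((B *ᵥ v) i) : ℝ) : ℂ) := by
    rw [← mulVec_mulVec, dotProduct_mulVec, vecMul_conjTranspose, star_star]
    simp only [dotProduct, Pi.star_apply]
    push_cast
    refine Finset.sum_congr rfl fun i _ => ?_
    rw [Complex.normSq_eq_conj_mul_self]
    simp
  have h0 := hc.dotProduct_mulVec_nonneg v
  rw [Matrix.sub_mulVec, dotProduct_sub, hAx, Matrix.smul_mulVec,
    Matrix.one_mulVec, dotProduct_smul, smul_eq_mul, hxx] at h0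
  have : (0 : ℂ) ≤ (((c * ∑ j, Complex.normSq (v j)) - ∑ i, Complex.normSq ((B *ᵥ v) i) : ℝ) : ℂ) := by
    convert h0 using 1
    push_cast
    ring
  rw [Complex.zero_le_real, sub_nonneg] at this
  exact this

lemma psd_opNorm_le {ν : Type*} [Fintype ν] [DecidableEq ν] {A : Matrix ν ν ℂ} {c : ℝ}
    (hA : A.PosSemidef) (hc0 : 0 ≤ c) (hc : (((c : ℝ) : ℂ) • 1 - A).PosSemidef) : ‖A‖ ≤ c := by
  obtain ⟨B, rfl⟩ := posSemidef_iff_eq_transpose_mul_self.mp hA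
  rw [Matrix.l2_opNorm_conjTranspose_mul_self]
  have hB : ‖B‖ ≤ Real.sqrt c := by
    rw [Matrix.l2_opNorm_def]
    refine ContinuousLinearMap.opNorm_le_bound _ (Real.sqrt_nonneg c) fun x => ?_
    set v : ν → ℂ := WithLp.equiv 2 _ x with hv
    have happ : ((Matrix.toEuclideanLin.trans LinearMap.toContinuousLinearMap) B) x =
        (WithLp.equiv 2 (ν → ℂ)).symm (B *ᵥ v) := rfl
    rw [happ]
    have hnormy : ‖(WithLp.equiv 2 (ν → ℂ)).symm (B *ᵥ v)‖ =
        Real.sqrt (∑ i, Complex.normSq ((B *ᵥ v) i)) := by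
      rw [EuclideanSpace.norm_eq]
      congr 1
      refine Finset.sum_congr rfl fun i _ => ?_
      simp [Complex.sq_norm]
    have hnormx : ‖x‖ = Real.sqrt (∑ j, Complex.normSq (v j)) := by
      rw [EuclideanSpace.norm_eq]
      congr 1
      refine Finset.sum_congr rfl fun j _ => ?_
      simp [Complex.sq_norm, hv]
    rw [hnormy, hnormx, ← Real.sqrt_mul hc0]
    exact Real.sqrt_le_sqrt (quad_bound hc v)
  calc ‖B‖ * ‖B‖ ≤ Real.sqrt c * Real.sqrt c :=
        mul_le_mul hB hB (norm_nonneg B) (Real.sqrt_nonneg c)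
    _ = c := Real.mul_self_sqrt hc0

lemma sum_range_two_mul {M : Type*} [AddCommMonoid M] (f : ℕ → M) (k : ℕ) :
    ∑ t ∈ Finset.range (2 * k), f t = ∑ i ∈ Finset.range k, (f (2 * i) + f (2 * i + 1)) := by
  induction k with
  | zero => simp
  | succ k ih =>
    have h2 : 2 * (k + 1) = (2 * k + 1) + 1 := by ring
    rw [h2, Finset.sum_range_succ, Finset.sum_range_succ, ih, Finset.sum_range_succ, add_assoc]

lemma sum_range_blocks {M : Type*} [AddCommMonoid M] (f : ℕ → M) (Nn : ℕ → ℕ) (k : ℕ) :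
    ∑ t ∈ Finset.range (∑ l ∈ Finset.range k, Nn l), f t
      = ∑ l ∈ Finset.range k, ∑ t ∈ Finset.Ico (∑ l' ∈ Finset.range l, Nn l')
          (∑ l' ∈ Finset.range (l + 1), Nn l'), f t := by
  induction k with
  | zero => simp
  | succ k ih =>
    rw [Finset.sum_range_succ (fun l => ∑ t ∈ Finset.Ico _ _, f t), ← ih]
    have hcons := Finset.sum_Ico_consecutive f (Nat.zero_le (∑ l' ∈ Finset.range k, Nn l'))
      (Nat.le_add_right (∑ l' ∈ Finset.range k, Nn l') (Nn k))
    simp only [← Finset.range_eq_Ico] at hcons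
    rw [Finset.sum_range_succ Nn k, ← hcons]

end Helpers

/-- `H` is `S`-local with local part `h`: under the canonical bijection
`(Fin n → Fin 2) ≃ (S → Fin 2) × (Sᶜ → Fin 2)`, `H` corresponds to `h ⊗ₖ I`.
Entrywise: `H x y = h (x|_S) (y|_S)` if `x` and `y` agree outside `S`, and `0` otherwise. -/
def Matrix.IsLocalOn {n : ℕ} (S : Finset (Fin n))
    (h : Matrix ({i // i ∈ S} → Fin 2) ({i // i ∈ S} → Fin 2) ℂ)
    (H : Matrix (Fin n → Fin 2) (Fin n → Fin 2) ℂ) : Prop :=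
  ∀ x y : Fin n → Fin 2,
    H x y = h (fun i => x i.1) (fun i => y i.1) *
      (if ∀ i ∉ S, x i = y i then 1 else 0)

section Local
variable {n : ℕ} {S : Finset (Fin n)}
  {h : Matrix ({i // i ∈ S} → Fin 2) ({i // i ∈ S} → Fin 2) ℂ}
  {H : Matrix (Fin n → Fin 2) (Fin n → Fin 2) ℂ}

noncomputable def eS (S : Finset (Fin n)) :
    (Fin n → Fin 2) ≃ ({i // i ∈ S} → Fin 2) × ({i // ¬ i ∈ S} → Fin 2) :=
  Equiv.piEquivPiSubtypeProd (fun i : Fin n => i ∈ S) (fun _ => Fin 2)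

lemma eS_fact1 (a : {i // i ∈ S} → Fin 2) (b : {i // ¬ i ∈ S} → Fin 2) :
    (fun i : {i // i ∈ S} => ((eS S).symm (a, b)) i.1) = a := by
  funext i
  simp [eS, Equiv.piEquivPiSubtypeProd_symm_apply, i.2]

lemma eS_fact2 (a a' : {i // i ∈ S} → Fin 2) (b b' : {i // ¬ i ∈ S} → Fin 2) :
    (∀ i ∉ S, ((eS S).symm (a, b)) i = ((eS S).symm (a', b')) i) ↔ b = b' := by
  constructor
  · intro hb
    funext i
    have := hb i.1 i.2
    simpa [eS, Equiv.piEquivPiSubtypeProd_symm_apply, i.2] using this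
  · rintro rfl i hi
    simp [eS, Equiv.piEquivPiSubtypeProd_symm_apply, hi]

lemma isLocalOn_posSemidef (hloc : Matrix.IsLocalOn S h H) (hh : h.PosSemidef) :
    H.PosSemidef := by
  unfold Matrix.IsLocalOn at hloc
  refine Matrix.PosSemidef.of_dotProduct_mulVec_nonneg ?_ ?_
  · funext x y
    rw [Matrix.conjTranspose_apply, hloc y x, hloc x y]
    have h1 : star (h (fun i => y i.1) (fun i => x i.1)) = h (fun i => x i.1) (fun i => y i.1) := by
      have := congrFun (congrFun hh.1 (fun i => x i.1)) (fun i => y i.1)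
      rw [Matrix.conjTranspose_apply] at this
      exact this
    have h2 : (∀ i ∉ S, y i = x i) ↔ (∀ i ∉ S, x i = y i) := by
      constructor <;> intro hyp i hi <;> exact (hyp i hi).symm
    have h3 : (if ∀ i ∉ S, y i = x i then (1:ℂ) else 0) =
        (if ∀ i ∉ S, x i = y i then 1 else 0) := if_congr h2 rfl rfl
    rw [star_mul', h1]
    have h4 : star (if ∀ i ∉ S, y i = x i then (1:ℂ) else 0) =
        (if ∀ i ∉ S, y i = x i then (1:ℂ) else 0) := by
      simp [apply_ite (star : ℂ → ℂ)]
    rw [h4, h3]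
  · intro x
    have key : star x ⬝ᵥ H *ᵥ x =
        ∑ b : {i // ¬ i ∈ S} → Fin 2,
          star (fun a => x ((eS S).symm (a, b))) ⬝ᵥ h *ᵥ (fun a => x ((eS S).symm (a, b))) := by
      calc star x ⬝ᵥ H *ᵥ x = ∑ u, ∑ v, star (x u) * (H u v * x v) := by
            simp [dotProduct, Matrix.mulVec, Finset.mul_sum]
        _ = ∑ p : _ × _, ∑ r : _ × _, star (x ((eS S).symm p)) *
              (H ((eS S).symm p) ((eS S).symm r) * x ((eS S).symm r)) := by
            rw [← Equiv.sum_comp (eS S).symm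
              (fun u => ∑ v, star (x u) * (H u v * x v))]
            refine Finset.sum_congr rfl fun p _ => ?_
            rw [← Equiv.sum_comp (eS S).symm
              (fun v => star (x ((eS S).symm p)) * (H ((eS S).symm p) v * x v))]
        _ = ∑ b, ∑ a, ∑ a', star (x ((eS S).symm (a, b))) *
              (h a a' * x ((eS S).symm (a', b))) := by
            rw [Fintype.sum_prod_type]
            rw [Finset.sum_comm]
            refine Finset.sum_congr rfl fun b _ => ?_
            refine Finset.sum_congr rfl fun a _ => ?_
            rw [Fintype.sum_prod_type]
            rw [Finset.sum_comm]
            simp only [hloc, eS_fact1, eS_fact2]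
            rw [Finset.sum_comm]
            refine Finset.sum_congr rfl fun a' _ => ?_
            simp [Finset.sum_ite_eq', mul_ite]
        _ = _ := by
            refine Finset.sum_congr rfl fun b _ => ?_
            simp [dotProduct, Matrix.mulVec, Finset.mul_sum]
    rw [key]
    exact Finset.sum_nonneg fun b _ => hh.dotProduct_mulVec_nonneg _

lemma isLocalOn_shift (hloc : Matrix.IsLocalOn S h H) (c : ℂ) :
    Matrix.IsLocalOn S (c • 1 - h) (c • 1 - H) := by
  intro x y
  rw [Matrix.sub_apply, Matrix.smul_apply, Matrix.one_apply, hloc x y,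
    Matrix.sub_apply, Matrix.smul_apply, Matrix.one_apply]
  by_cases hoff : ∀ i ∉ S, x i = y i
  · by_cases hon : (fun i : {i // i ∈ S} => x i.1) = (fun i : {i // i ∈ S} => y i.1)
    · have hxy : x = y := by
        funext i
        by_cases hi : i ∈ S
        · exact congrFun hon ⟨i, hi⟩
        · exact hoff i hi
      simp [hxy, hon, hoff]
    · have hxy : ¬ x = y := fun hc => hon (by subst hc; rfl)
      rw [if_pos hoff]
      simp [hxy, hon]
  · have hxy : ¬ x = y := fun hc => hoff (fun i _ => by rw [hc])
    simp [hxy, hoff]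

lemma isLocalOn_trace (hloc : Matrix.IsLocalOn S h H) :
    H.trace = ((2 : ℂ) ^ (n - S.card)) * h.trace := by
  have hdiag : ∀ x : Fin n → Fin 2, H x x = h (fun i => x i.1) (fun i => x i.1) := by
    intro x
    rw [hloc x x]
    simp
  rw [Matrix.trace, Matrix.trace]
  calc ∑ x, H.diag x = ∑ x : Fin n → Fin 2, h (fun i => x i.1) (fun i => x i.1) := by
        refine Finset.sum_congr rfl fun x _ => ?_
        rw [Matrix.diag_apply, hdiag]
    _ = ∑ p : ({i // i ∈ S} → Fin 2) × ({i // ¬ i ∈ S} → Fin 2),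
          h (fun i => ((eS S).symm p) i.1) (fun i => ((eS S).symm p) i.1) := by
        rw [Equiv.sum_comp (eS S).symm
          (fun x : Fin n → Fin 2 => h (fun i => x i.1) (fun i => x i.1))]
    _ = ∑ a : {i // i ∈ S} → Fin 2, ∑ b : {i // ¬ i ∈ S} → Fin 2, h a a := by
        rw [Fintype.sum_prod_type]
        refine Finset.sum_congr rfl fun a _ => Finset.sum_congr rfl fun b _ => ?_
        rw [eS_fact1]
    _ = ((2 : ℂ) ^ (n - S.card)) * ∑ a, h.diag a := by
        have hcard : (Fintype.card ({i // i ∉ S} → Fin 2)) = 2 ^ (n - S.card) := by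
          rw [Fintype.card_fun, Fintype.card_fin, Fintype.card_subtype_compl,
            Fintype.card_coe, Fintype.card_fin]
        simp only [Finset.sum_const, Finset.card_univ, nsmul_eq_mul, hcard, Finset.mul_sum,
          Matrix.diag_apply]
        push_cast
        rfl
    _ = _ := rfl

end Local

/-- **Hamiltonian local smoothing lemma.**
If `H = ∑ᵢ H_i ≼ I` is a sum of `q`-local PSD terms (each `H_i` being `C_i`-local
with PSD local part `h_i`, `|C_i| ≤ q`), then there are terms `H'_i`, each a
nonnegative combination `c_i • H_{j(i)} + d_i • H_{k(i)}` of two of the original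
terms (hence PSD and `2q`-local), with `‖H'_i‖ ≤ 1` and
`(1/m) ∑ᵢ H'_i = 2^{-(q+3)} • H`. -/
theorem hamiltonian_local_smoothing
    (n q m : ℕ) (hqn : q ≤ n) (hm : 1 ≤ m)
    (C : Fin m → Finset (Fin n))
    (hCcard : ∀ i, (C i).card ≤ q)
    (h : ∀ i : Fin m, Matrix ({j // j ∈ C i} → Fin 2) ({j // j ∈ C i} → Fin 2) ℂ)
    (hpsd : ∀ i, (h i).PosSemidef)
    (H : Fin m → Matrix (Fin n → Fin 2) (Fin n → Fin 2) ℂ)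
    (hlocal : ∀ i, Matrix.IsLocalOn (C i) (h i) (H i))
    (hle : ((1 : Matrix (Fin n → Fin 2) (Fin n → Fin 2) ℂ) - ∑ i, H i).PosSemidef) :
    ∃ (H' : Fin m → Matrix (Fin n → Fin 2) (Fin n → Fin 2) ℂ)
      (j k : Fin m → Fin m) (c d : Fin m → ℝ),
      (∀ i, 0 ≤ c i) ∧ (∀ i, 0 ≤ d i) ∧
      (∀ i, H' i = c i • H (j i) + d i • H (k i)) ∧
      (∀ i, ‖H' i‖ ≤ 1) ∧
      ((1 / (m : ℝ)) • ∑ i, H' i = ((2 : ℝ) ^ (q + 3))⁻¹ • ∑ i, H i) := by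
  classical
  -- real trace of local parts
  set g : Fin m → ℝ := fun l => ((h l).trace).re with hgdef
  have hg0 : ∀ l, 0 ≤ g l := fun l => (psd_trace_im (hpsd l)).2
  have hHpsd : ∀ l, (H l).PosSemidef := fun l => isLocalOn_posSemidef (hlocal l) (hpsd l)
  have hnorm : ∀ l, ‖H l‖ ≤ g l := by
    intro l
    refine psd_opNorm_le (hHpsd l) (hg0 l) ?_
    have hshift := isLocalOn_shift (hlocal l) ((g l : ℝ) : ℂ)
    exact isLocalOn_posSemidef hshift (psd_trace_smul_one_sub (hpsd l))
  -- trace bound : ∑ g ≤ 2 ^ q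
  have hgsum : ∑ l, g l ≤ 2 ^ q := by
    have htrH : ∀ l, ((H l).trace).re = 2 ^ (n - (C l).card) * g l := by
      intro l
      rw [isLocalOn_trace (hlocal l), (psd_trace_im (hpsd l)).1]
      have : ((2 : ℂ) ^ (n - (C l).card)) * (((g l : ℝ)) : ℂ)
          = (((2 ^ (n - (C l).card) * g l : ℝ)) : ℂ) := by
        push_cast
        ring
      rw [this, Complex.ofReal_re]
    have hsum : ∑ l, ((H l).trace).re ≤ 2 ^ n := by
      have h0 := (psd_trace_im hle).2
      rw [Matrix.trace_sub, Matrix.trace_one, Matrix.trace_sum] at h0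
      have hcard : (Fintype.card (Fin n → Fin 2)) = 2 ^ n := by
        rw [Fintype.card_fun, Fintype.card_fin, Fintype.card_fin]
      rw [Complex.sub_re, Complex.re_sum] at h0
      simp only [Complex.natCast_re, hcard] at h0
      push_cast at h0
      linarith
    have hstep : ∀ l, 2 ^ (n - q) * g l ≤ ((H l).trace).re := by
      intro l
      rw [htrH l]
      refine mul_le_mul_of_nonneg_right ?_ (hg0 l)
      exact pow_le_pow_right₀ one_le_two (Nat.sub_le_sub_left (hCcard l) n)
    have h1 : 2 ^ (n - q) * ∑ l, g l ≤ 2 ^ n := by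
      rw [Finset.mul_sum]
      exact le_trans (Finset.sum_le_sum fun l _ => hstep l) hsum
    have h2 : (2 : ℝ) ^ n = 2 ^ (n - q) * 2 ^ q := by
      rw [← pow_add, Nat.sub_add_cancel hqn]
    rw [h2] at h1
    exact le_of_mul_le_mul_left h1 (by positivity)
  -- the chunking construction
  set α : ℝ := (m : ℝ) * ((2 : ℝ) ^ (q + 3))⁻¹ with hαdef
  have hα0 : 0 ≤ α := by positivity
  set gn : ℕ → ℝ := fun l => if hl : l < m then g ⟨l, hl⟩ else 0 with hgndef
  have hgn0 : ∀ l, 0 ≤ gn l := by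
    intro l
    rw [hgndef]
    dsimp only
    split
    · exact hg0 _
    · exact le_refl 0
  set Nn : ℕ → ℕ := fun l => max 1 ⌈4 * (α * gn l)⌉₊ with hNndef
  have hNn1 : ∀ l, 1 ≤ Nn l := fun l => le_max_left _ _
  have hNnR0 : ∀ l, (0 : ℝ) < (Nn l : ℝ) := by
    intro l
    exact_mod_cast hNn1 l
  have hNnbound : ∀ l, 4 * (α * gn l) ≤ (Nn l : ℝ) := by
    intro l
    calc 4 * (α * gn l) ≤ (⌈4 * (α * gn l)⌉₊ : ℝ) := Nat.le_ceil _
      _ ≤ (Nn l : ℝ) := by exact_mod_cast le_max_right 1 ⌈4 * (α * gn l)⌉₊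
  have hNnle : ∀ l, (Nn l : ℝ) ≤ 1 + 4 * (α * gn l) := by
    intro l
    have hnonneg : (0 : ℝ) ≤ 4 * (α * gn l) := by
      have := hgn0 l
      positivity
    rcases Nat.eq_zero_or_pos ⌈4 * (α * gn l)⌉₊ with h0 | hpos
    · have : Nn l = 1 := by rw [hNndef]; dsimp only; omega
      rw [this]
      push_cast
      linarith
    · have hNeq : Nn l = ⌈4 * (α * gn l)⌉₊ := by rw [hNndef]; dsimp only; omega
      rw [hNeq]
      have := Nat.ceil_lt_add_one hnonneg
      linarith
  set Mf : ℕ → ℕ := fun k => ∑ l ∈ Finset.range k, Nn l with hMfdef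
  have hMfmono : Monotone Mf := by
    intro a b hab
    exact Finset.sum_le_sum_of_subset (Finset.range_subset_range.mpr hab)
  set T := Mf m with hTdef
  have hα2q : α * 2 ^ q = (m : ℝ) / 8 := by
    rw [hαdef]
    have h8 : (2 : ℝ) ^ (q + 3) = 2 ^ q * 8 := by
      rw [pow_add]
      norm_num
    rw [h8]
    have : (2 : ℝ) ^ q ≠ 0 := by positivity
    field_simp
  have hgnsum : ∑ l ∈ Finset.range m, gn l ≤ 2 ^ q := by
    rw [← Fin.sum_univ_eq_sum_range (fun l => gn l) m]
    refine le_trans (le_of_eq (Finset.sum_congr rfl fun i _ => ?_)) hgsum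
    rw [hgndef]
    dsimp only
    rw [dif_pos i.isLt]
  have hTle : T ≤ 2 * m := by
    have hreal : (T : ℝ) ≤ (m : ℝ) + 4 * (α * ∑ l ∈ Finset.range m, gn l) := by
      rw [hTdef, hMfdef]
      push_cast
      calc ∑ l ∈ Finset.range m, (Nn l : ℝ) ≤ ∑ l ∈ Finset.range m, (1 + 4 * (α * gn l)) :=
            Finset.sum_le_sum fun l _ => hNnle l
        _ = (m : ℝ) + 4 * (α * ∑ l ∈ Finset.range m, gn l) := by
            rw [Finset.sum_add_distrib, Finset.sum_const, Finset.card_range, nsmul_eq_mul,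
              mul_one, Finset.mul_sum, Finset.mul_sum]
    have h2 : α * ∑ l ∈ Finset.range m, gn l ≤ (m : ℝ) / 8 := by
      calc α * ∑ l ∈ Finset.range m, gn l ≤ α * 2 ^ q :=
            mul_le_mul_of_nonneg_left hgnsum hα0
        _ = (m : ℝ) / 8 := hα2q
    have : (T : ℝ) ≤ 2 * m := by linarith
    exact_mod_cast this
  -- the piece index of a chunk
  set P : ℕ → ℕ := fun t => Nat.findGreatest (fun l => Mf l ≤ t) m with hPdef
  have hMf0 : Mf 0 = 0 := by rw [hMfdef]; simp
  have hPle : ∀ t, Mf (P t) ≤ t := by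
    intro t
    exact Nat.findGreatest_spec (P := fun l => Mf l ≤ t) (Nat.zero_le m)
      (by show Mf 0 ≤ t; rw [hMf0]; exact Nat.zero_le t)
  have hPm : ∀ t, t < T → P t < m := by
    intro t ht
    have h1 : P t ≤ m := Nat.findGreatest_le (P := fun l => Mf l ≤ t) m
    rcases lt_or_eq_of_le h1 with h | h
    · exact h
    · exfalso
      have := hPle t
      rw [h, ← hTdef] at this
      omega
  have hPlt : ∀ t, t < T → t < Mf (P t + 1) := by
    intro t ht
    by_contra hcon
    push_neg at hcon
    exact Nat.findGreatest_is_greatest (P := fun l => Mf l ≤ t) (n := m)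
      (lt_add_one _) (Nat.succ_le_of_lt (hPm t ht)) hcon
  have hPval : ∀ l, l < m → ∀ t, Mf l ≤ t → t < Mf (l + 1) → P t = l := by
    intro l hl t h1 h2
    refine le_antisymm ?_ (Nat.le_findGreatest (P := fun l' => Mf l' ≤ t) (le_of_lt hl) h1)
    by_contra hcon
    push_neg at hcon
    have h3 : Mf (l + 1) ≤ Mf (P t) := hMfmono hcon
    have := hPle t
    omega
  set Hm : ℕ → Matrix (Fin n → Fin 2) (Fin n → Fin 2) ℂ :=
    fun l => if hl : l < m then H ⟨l, hl⟩ else 0 with hHmdef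
  set coef : ℕ → ℝ := fun t => if t < T then α / (Nn (P t)) else 0 with hcoefdef
  have hcoef0 : ∀ t, 0 ≤ coef t := by
    intro t
    rw [hcoefdef]
    dsimp only
    split
    · exact div_nonneg hα0 (le_of_lt (hNnR0 _))
    · exact le_refl 0
  set Pl : ℕ → Fin m := fun t => if hlt : P t < m then ⟨P t, hlt⟩ else ⟨0, hm⟩ with hPldef
  set F : ℕ → Matrix (Fin n → Fin 2) (Fin n → Fin 2) ℂ :=
    fun t => coef t • Hm (P t) with hFdef
  have hFeq : ∀ t, F t = coef t • H (Pl t) := by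
    intro t
    rw [hFdef, hPldef, hHmdef]
    dsimp only
    by_cases ht : t < T
    · rw [dif_pos (hPm t ht), dif_pos (hPm t ht)]
    · have : coef t = 0 := by rw [hcoefdef]; dsimp only; rw [if_neg ht]
      rw [this, zero_smul, zero_smul]
  have hsmulnorm : ∀ (r : ℝ), 0 ≤ r → ∀ (A : Matrix (Fin n → Fin 2) (Fin n → Fin 2) ℂ),
      ‖r • A‖ = r * ‖A‖ := by
    intro r hr A
    have hr' : r • A = ((r : ℝ) : ℂ) • A := by
      ext i j
      simp [Matrix.smul_apply, Complex.real_smul]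
    rw [hr', norm_smul]
    simp [Complex.norm_real, Real.norm_eq_abs, abs_of_nonneg hr]
  have hFnorm : ∀ t, ‖coef t • H (Pl t)‖ ≤ (4 : ℝ)⁻¹ := by
    intro t
    by_cases ht : t < T
    · have hc : coef t = α / (Nn (P t)) := by rw [hcoefdef]; dsimp only; rw [if_pos ht]
      have hcnn : 0 ≤ coef t := hcoef0 t
      rw [hsmulnorm _ hcnn]
      have hgP : ‖H (Pl t)‖ ≤ gn (P t) := by
        have h1 : Pl t = ⟨P t, hPm t ht⟩ := by
          rw [hPldef]; dsimp only; rw [dif_pos (hPm t ht)]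
        have h2 : gn (P t) = g ⟨P t, hPm t ht⟩ := by
          rw [hgndef]; dsimp only; rw [dif_pos (hPm t ht)]
        rw [h1, h2]
        exact hnorm _
      calc coef t * ‖H (Pl t)‖ ≤ coef t * gn (P t) :=
            mul_le_mul_of_nonneg_left hgP hcnn
        _ = (α * gn (P t)) / (Nn (P t)) := by rw [hc]; ring
        _ ≤ (4 : ℝ)⁻¹ := by
            rw [div_le_iff₀ (hNnR0 _)]
            have := hNnbound (P t)
            linarith
    · have : coef t = 0 := by rw [hcoefdef]; dsimp only; rw [if_neg ht]
      rw [this, zero_smul, norm_zero]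
      norm_num
  refine ⟨fun i => coef (2 * (i : ℕ)) • H (Pl (2 * (i : ℕ))) +
      coef (2 * (i : ℕ) + 1) • H (Pl (2 * (i : ℕ) + 1)),
    fun i => Pl (2 * (i : ℕ)), fun i => Pl (2 * (i : ℕ) + 1),
    fun i => coef (2 * (i : ℕ)), fun i => coef (2 * (i : ℕ) + 1),
    fun i => hcoef0 _, fun i => hcoef0 _, fun i => rfl, ?_, ?_⟩
  · intro i
    refine le_trans (norm_add_le _ _) ?_
    have h1 := hFnorm (2 * (i : ℕ))
    have h2 := hFnorm (2 * (i : ℕ) + 1)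
    linarith
  · have hsum1 : ∑ i : Fin m, (coef (2 * (i : ℕ)) • H (Pl (2 * (i : ℕ))) +
        coef (2 * (i : ℕ) + 1) • H (Pl (2 * (i : ℕ) + 1))) = α • ∑ i, H i := by
      calc ∑ i : Fin m, (coef (2 * (i : ℕ)) • H (Pl (2 * (i : ℕ))) +
              coef (2 * (i : ℕ) + 1) • H (Pl (2 * (i : ℕ) + 1)))
          = ∑ i ∈ Finset.range m, (F (2 * i) + F (2 * i + 1)) := by
            rw [← Fin.sum_univ_eq_sum_range (fun i => F (2 * i) + F (2 * i + 1)) m]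
            refine Finset.sum_congr rfl fun i _ => ?_
            rw [hFeq, hFeq]
        _ = ∑ t ∈ Finset.range (2 * m), F t := (sum_range_two_mul F m).symm
        _ = ∑ t ∈ Finset.range T, F t := by
            symm
            refine Finset.sum_subset (Finset.range_subset_range.mpr hTle) ?_
            intro t _ htT
            rw [Finset.mem_range, not_lt] at htT
            rw [hFdef]
            dsimp only
            have : coef t = 0 := by
              rw [hcoefdef]; dsimp only; rw [if_neg (by omega)]
            rw [this, zero_smul]
        _ = ∑ l ∈ Finset.range m, ∑ t ∈ Finset.Ico (Mf l) (Mf (l + 1)), F t := by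
            rw [hTdef, hMfdef]
            exact sum_range_blocks F Nn m
        _ = ∑ l ∈ Finset.range m, α • Hm l := by
            refine Finset.sum_congr rfl fun l hl => ?_
            rw [Finset.mem_range] at hl
            have hconst : ∀ t ∈ Finset.Ico (Mf l) (Mf (l + 1)),
                F t = (α / (Nn l)) • Hm l := by
              intro t htm
              rw [Finset.mem_Ico] at htm
              have htT : t < T := lt_of_lt_of_le htm.2 (hMfmono hl)
              have hPt : P t = l := hPval l hl t htm.1 htm.2
              rw [hFdef]
              dsimp only
              rw [hPt]
              congr 1
              rw [hcoefdef]
              dsimp only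
              rw [if_pos htT, hPt]
            rw [Finset.sum_congr rfl hconst, Finset.sum_const, Nat.card_Ico]
            have hcard : Mf (l + 1) - Mf l = Nn l := by
              rw [hMfdef]
              dsimp only
              rw [Finset.sum_range_succ]
              omega
            rw [hcard, ← Nat.cast_smul_eq_nsmul ℝ, smul_smul]
            congr 1
            rw [mul_comm, div_mul_cancel₀]
            exact ne_of_gt (hNnR0 l)
        _ = α • ∑ i : Fin m, H i := by
            rw [← Finset.smul_sum]
            congr 1
            rw [← Fin.sum_univ_eq_sum_range (fun l => Hm l) m]
            refine Finset.sum_congr rfl fun i _ => ?_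
            rw [hHmdef]
            dsimp only
            rw [dif_pos i.isLt]
    rw [hsum1, smul_smul]
    congr 1
    rw [hαdef]
    have hm0 : (m : ℝ) ≠ 0 := by
      have : (1 : ℝ) ≤ (m : ℝ) := by exact_mod_cast hm
      linarith
    field_simp
end

section
/- Let d ≥ 1 be a natural number and 0 < ε < 1, and set h = √(1 − ε²). Suppose P is a finite set of unit vectors in ℂ^{d·d} (indexed by Fin d × Fin d) such that for every unit vector φ ∈ ℂ^{d·d} there exists ψ ∈ P with |ψᴴφ| ≥ h (P is an h-net for pure states on the doubled space). Define D = { tr_B(ψψᴴ) : ψ ∈ P }, where tr_B is the partial trace over the second factor: (tr_B M)_{i,i'} = Σ_{j ∈ Fin d} M_{(i,j),(i',j)}. Then for every PSD d×d complex matrix σ with trace(σ) = 1, there exists ρ ∈ D with (1/2)·‖ρ − σ‖₁ ≤ ε; moreover |D| ≤ |P|. In other words, partial-tracing an h-net of purifications yields an ε-covering set of density matrices in trace distance, of no larger cardinality. -/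
open Matrix
open scoped ComplexOrder Classical

/-- The trace norm `‖A‖₁ = tr √(Aᴴ A)` of a complex matrix. -/
noncomputable def Matrix.traceNorm {n : Type*} [Fintype n] [DecidableEq n]
    (A : Matrix n n ℂ) : ℝ :=
  ((Matrix.posSemidef_conjTranspose_mul_self A).1.eigenvectorUnitary.1 *
      Matrix.diagonal (fun i => ((Real.sqrt
        ((Matrix.posSemidef_conjTranspose_mul_self A).1.eigenvalues i) : ℝ) : ℂ)) *
      (star (Matrix.posSemidef_conjTranspose_mul_self A).1.eigenvectorUnitary.1)).trace.re

/-- The partial trace over the second tensor factor: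
`(tr_B M)_{i,i'} = ∑ⱼ M_{(i,j),(i',j)}`. -/
noncomputable def ptraceB {d : ℕ} (M : Matrix (Fin d × Fin d) (Fin d × Fin d) ℂ) :
    Matrix (Fin d) (Fin d) ℂ :=
  Matrix.of fun i i' => ∑ j : Fin d, M (i, j) (i', j)

section Helpers

set_option linter.unusedSectionVars false

variable {n : Type*} [Fintype n] [DecidableEq n]

open scoped MatrixOrder in
/-- The PSD square root (via the continuous functional calculus). -/
noncomputable def Matrix.PosSemidef.sqrt {A : Matrix n n ℂ} (_hA : A.PosSemidef) :
    Matrix n n ℂ :=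
  CFC.sqrt A

open scoped MatrixOrder in
lemma Matrix.PosSemidef.posSemidef_sqrt {A : Matrix n n ℂ} (hA : A.PosSemidef) :
    hA.sqrt.PosSemidef :=
  Matrix.nonneg_iff_posSemidef.mp (CFC.sqrt_nonneg A)

open scoped MatrixOrder in
lemma Matrix.PosSemidef.sqrt_mul_self {A : Matrix n n ℂ} (hA : A.PosSemidef) :
    hA.sqrt * hA.sqrt = A :=
  CFC.sqrt_mul_sqrt_self A (Matrix.nonneg_iff_posSemidef.mpr hA)

open scoped MatrixOrder in
lemma Matrix.PosSemidef.eq_sqrt_of_sq_eq {A : Matrix n n ℂ} (hA : A.PosSemidef)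
    {B : Matrix n n ℂ} (hB : B.PosSemidef) (hAB : A ^ 2 = B) : A = hB.sqrt := by
  unfold Matrix.PosSemidef.sqrt
  rw [eq_comm, CFC.sqrt_eq_iff _ _ (Matrix.nonneg_iff_posSemidef.mpr hB)
    (Matrix.nonneg_iff_posSemidef.mpr hA), ← pow_two, hAB]

open scoped MatrixOrder in
lemma traceNorm_eq (A : Matrix n n ℂ) :
    A.traceNorm = ((Matrix.posSemidef_conjTranspose_mul_self A).sqrt.trace).re := by
  unfold Matrix.PosSemidef.sqrt
  rw [CFC.sqrt_eq_cfc, cfc_nnreal_eq_real _ _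
    (Matrix.nonneg_iff_posSemidef.mpr (Matrix.posSemidef_conjTranspose_mul_self A)),
    (Matrix.posSemidef_conjTranspose_mul_self A).1.cfc_eq, IsHermitian.cfc,
    Unitary.conjStarAlgAut_apply]
  rw [Matrix.traceNorm]
  congr 4
  congr 1
  funext i
  simp only [Function.comp_apply]
  rw [Real.coe_sqrt, Real.coe_toNNReal', max_eq_left
    ((Matrix.posSemidef_conjTranspose_mul_self A).eigenvalues_nonneg i)]
  rfl

lemma vmv_mul (a b u v : n → ℂ) :
    vecMulVec a (star b) * vecMulVec u (star v) = (star b ⬝ᵥ u) • vecMulVec a (star v) := by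
  ext i j
  simp only [Matrix.mul_apply, vecMulVec_apply, Matrix.smul_apply, smul_eq_mul, dotProduct,
    Pi.star_apply, Finset.sum_mul]
  exact Finset.sum_congr rfl fun k _ => by ring

lemma vmv_herm (a : n → ℂ) : (vecMulVec a (star a)).IsHermitian := by
  ext i j
  simp [Matrix.conjTranspose_apply, vecMulVec_apply, mul_comm]

lemma vmv_trace (a b : n → ℂ) : (vecMulVec a (star b)).trace = star b ⬝ᵥ a := by
  simp [Matrix.trace, Matrix.diag, vecMulVec_apply, dotProduct, mul_comm]

lemma star_dot_comm (a b : n → ℂ) : star a ⬝ᵥ b = starRingEnd ℂ (star b ⬝ᵥ a) := by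
  simp [dotProduct, map_sum, mul_comm]

lemma psd_smul_real {M : Matrix n n ℂ} (hM : M.PosSemidef) {c : ℝ} (hc : 0 ≤ c) :
    (((c : ℂ)) • M).PosSemidef := by
  refine posSemidef_iff_dotProduct_mulVec.mpr ⟨?_, ?_⟩
  · have := hM.1
    unfold Matrix.IsHermitian at *
    rw [conjTranspose_smul, this]
    congr 1
    simp
  · intro x
    rw [smul_mulVec, dotProduct_smul, smul_eq_mul]
    have h0 : (0:ℂ) ≤ (c : ℂ) := by exact_mod_cast Complex.zero_le_real.mpr hc
    exact mul_nonneg h0 (hM.dotProduct_mulVec_nonneg x)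

lemma traceNorm_zero : (0 : Matrix n n ℂ).traceNorm = 0 := by
  have h0 : (0 : Matrix n n ℂ) =
      (Matrix.posSemidef_conjTranspose_mul_self (0 : Matrix n n ℂ)).sqrt :=
    Matrix.PosSemidef.zero.eq_sqrt_of_sq_eq _ (by simp)
  rw [traceNorm_eq, ← h0]
  simp

lemma dot_abs_le_one {m : Type*} [Fintype m] (ψ φ : m → ℂ)
    (hψ : star ψ ⬝ᵥ ψ = 1) (hφ : star φ ⬝ᵥ φ = 1) : ‖star ψ ⬝ᵥ φ‖ ≤ 1 := by
  let x : EuclideanSpace ℂ m := (WithLp.equiv 2 _).symm ψ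
  let y : EuclideanSpace ℂ m := (WithLp.equiv 2 _).symm φ
  have hxy : (inner ℂ x y : ℂ) = star ψ ⬝ᵥ φ := dotProduct_comm φ (star ψ)
  have hnorm : ∀ (a : m → ℂ), star a ⬝ᵥ a = 1 →
      ‖((WithLp.equiv 2 (m → ℂ)).symm a : EuclideanSpace ℂ m)‖ = 1 := by
    intro a ha
    have h1 : (inner ℂ ((WithLp.equiv 2 (m → ℂ)).symm a : EuclideanSpace ℂ m)
        ((WithLp.equiv 2 (m → ℂ)).symm a : EuclideanSpace ℂ m) : ℂ) = 1 := by
      exact (dotProduct_comm a (star a)).trans ha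
    have h2 := inner_self_eq_norm_sq_to_K (𝕜 := ℂ)
      ((WithLp.equiv 2 (m → ℂ)).symm a : EuclideanSpace ℂ m)
    rw [h1] at h2
    have h3 : (1:ℝ) = ‖((WithLp.equiv 2 (m → ℂ)).symm a : EuclideanSpace ℂ m)‖ ^ 2 := by
      have h2' : ((1:ℝ):ℂ) = ((‖((WithLp.equiv 2 (m → ℂ)).symm a : EuclideanSpace ℂ m)‖ ^ 2 : ℝ):ℂ) := by
        push_cast
        exact h2
      exact_mod_cast h2'
    nlinarith [norm_nonneg ((WithLp.equiv 2 (m → ℂ)).symm a : EuclideanSpace ℂ m)]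
  have hx : ‖x‖ = 1 := hnorm ψ hψ
  have hy : ‖y‖ = 1 := hnorm φ hφ
  calc ‖star ψ ⬝ᵥ φ‖ = ‖(inner ℂ x y : ℂ)‖ := by rw [hxy]
    _ ≤ ‖x‖ * ‖y‖ := norm_inner_le_norm x y
    _ = 1 := by rw [hx, hy, one_mul]

lemma traceNorm_sub_le_of_psd {X Y : Matrix n n ℂ}
    (hX : X.PosSemidef) (hY : Y.PosSemidef) :
    (X - Y).traceNorm ≤ (X.trace).re + (Y.trace).re := by
  set B : Matrix n n ℂ := X - Y with hBdef
  have hB : B.IsHermitian := hX.1.sub hY.1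
  set U : Matrix n n ℂ := (hB.eigenvectorUnitary : Matrix n n ℂ) with hU
  have hUU : U * star U = 1 := (Matrix.mem_unitaryGroup_iff).mp hB.eigenvectorUnitary.2
  have hUU' : star U * U = 1 := (Matrix.mem_unitaryGroup_iff').mp hB.eigenvectorUnitary.2
  have hmulUD : ∀ (f g : n → ℂ), (U * diagonal f * star U) * (U * diagonal g * star U)
      = U * diagonal (fun i => f i * g i) * star U := by
    intro f g
    simp only [Matrix.mul_assoc]
    rw [← Matrix.mul_assoc (star U) U (diagonal g * star U), hUU', Matrix.one_mul,
      ← Matrix.mul_assoc (diagonal f) (diagonal g) (star U), diagonal_mul_diagonal]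
  set S : Matrix n n ℂ := U * diagonal (fun i => ((|hB.eigenvalues i| : ℝ) : ℂ)) * star U with hS
  have hSpsd : S.PosSemidef := by
    have hd : Matrix.PosSemidef (diagonal (fun i => ((|hB.eigenvalues i| : ℝ) : ℂ))) :=
      Matrix.PosSemidef.diagonal fun i => by
        simpa using Complex.zero_le_real.mpr (abs_nonneg (hB.eigenvalues i))
    have := hd.mul_mul_conjTranspose_same U
    simpa [hS, Matrix.star_eq_conjTranspose] using this
  have hBspec : B = U * diagonal (fun i => ((hB.eigenvalues i : ℝ) : ℂ)) * star U := by
    conv_lhs => rw [hB.spectral_theorem]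
    rfl
  have hSsq : S ^ 2 = Bᴴ * B := by
    rw [hB.eq, pow_two, hS, hmulUD]
    conv_rhs => rw [hBspec]
    rw [hmulUD]
    have habs : (fun i => ((|hB.eigenvalues i| : ℝ) : ℂ) * ((|hB.eigenvalues i| : ℝ) : ℂ))
        = fun i => ((hB.eigenvalues i : ℝ) : ℂ) * ((hB.eigenvalues i : ℝ) : ℂ) := by
      funext i
      rw [← Complex.ofReal_mul, ← Complex.ofReal_mul, abs_mul_abs_self]
    rw [habs]
  have hSsqrt : S = (Matrix.posSemidef_conjTranspose_mul_self B).sqrt :=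
    hSpsd.eq_sqrt_of_sq_eq _ hSsq
  have htrS : (S.trace).re = ∑ i, |hB.eigenvalues i| := by
    rw [hS, Matrix.trace_mul_cycle, hUU', Matrix.one_mul, Matrix.trace_diagonal]
    simp [Complex.re_sum]
  have key : ∀ i, |hB.eigenvalues i|
      ≤ (star (⇑(hB.eigenvectorBasis i)) ⬝ᵥ X *ᵥ ⇑(hB.eigenvectorBasis i)).re
      + (star (⇑(hB.eigenvectorBasis i)) ⬝ᵥ Y *ᵥ ⇑(hB.eigenvectorBasis i)).re := by
    intro i
    have hx0 : (0:ℝ) ≤ (star (⇑(hB.eigenvectorBasis i)) ⬝ᵥ X *ᵥ ⇑(hB.eigenvectorBasis i)).re :=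
      hX.re_dotProduct_nonneg _
    have hy0 : (0:ℝ) ≤ (star (⇑(hB.eigenvectorBasis i)) ⬝ᵥ Y *ᵥ ⇑(hB.eigenvectorBasis i)).re :=
      hY.re_dotProduct_nonneg _
    have hsub : hB.eigenvalues i
        = (star (⇑(hB.eigenvectorBasis i)) ⬝ᵥ X *ᵥ ⇑(hB.eigenvectorBasis i)).re
        - (star (⇑(hB.eigenvectorBasis i)) ⬝ᵥ Y *ᵥ ⇑(hB.eigenvectorBasis i)).re := by
      rw [hB.eigenvalues_eq i]
      simp only [hBdef, Matrix.sub_mulVec, dotProduct_sub, map_sub]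
      rfl
    rw [hsub]
    calc |_ - _| ≤ |_| + |_| := abs_sub _ _
      _ = _ + _ := by rw [abs_of_nonneg hx0, abs_of_nonneg hy0]
  have hsumX : ∀ (Z : Matrix n n ℂ),
      ∑ i, (star (⇑(hB.eigenvectorBasis i)) ⬝ᵥ Z *ᵥ ⇑(hB.eigenvectorBasis i)).re
        = (Z.trace).re := by
    intro Z
    have hentry : ∀ i, star (⇑(hB.eigenvectorBasis i)) ⬝ᵥ Z *ᵥ ⇑(hB.eigenvectorBasis i)
        = (star U * Z * U) i i := by
      intro i
      simp only [Matrix.mul_apply, Matrix.mulVec, dotProduct, Pi.star_apply, hU,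
        Matrix.star_apply, Matrix.IsHermitian.eigenvectorUnitary_apply, Finset.mul_sum,
        Finset.sum_mul]
      rw [Finset.sum_comm]
      refine Finset.sum_congr rfl fun k _ => Finset.sum_congr rfl fun l _ => by ring
    simp only [hentry]
    rw [← Complex.re_sum]
    have htr : ∑ i, (star U * Z * U) i i = (star U * Z * U).trace := by
      simp [Matrix.trace, Matrix.diag]
    rw [htr, Matrix.trace_mul_cycle, hUU, Matrix.one_mul]
  have hfin : (X - Y).traceNorm = ∑ i, |hB.eigenvalues i| := by
    rw [traceNorm_eq, ← hBdef, ← hSsqrt, htrS]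
  rw [hfin, ← hsumX X, ← hsumX Y, ← Finset.sum_add_distrib]
  exact Finset.sum_le_sum fun i _ => key i

end Helpers

section PtraceHelpers

variable {d : ℕ}

lemma ptraceB_sub (M N : Matrix (Fin d × Fin d) (Fin d × Fin d) ℂ) :
    ptraceB (M - N) = ptraceB M - ptraceB N := by
  ext i i'
  simp [ptraceB, Finset.sum_sub_distrib]

lemma ptraceB_trace (M : Matrix (Fin d × Fin d) (Fin d × Fin d) ℂ) :
    (ptraceB M).trace = M.trace := by
  simp [ptraceB, Matrix.trace, Matrix.diag, Fintype.sum_prod_type]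

lemma ptraceB_posSemidef {M : Matrix (Fin d × Fin d) (Fin d × Fin d) ℂ}
    (hM : M.PosSemidef) : (ptraceB M).PosSemidef := by
  refine posSemidef_iff_dotProduct_mulVec.mpr ⟨?_, ?_⟩
  · ext i i'
    simp only [Matrix.conjTranspose_apply, ptraceB, Matrix.of_apply, star_sum]
    refine Finset.sum_congr rfl fun j _ => ?_
    have := congrFun (congrFun hM.1 (i, j)) (i', j)
    simpa [Matrix.conjTranspose_apply] using this
  · intro x
    have key : star x ⬝ᵥ (ptraceB M) *ᵥ x
        = ∑ j : Fin d, star (fun p : Fin d × Fin d => if p.2 = j then x p.1 else 0) ⬝ᵥ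
            M *ᵥ (fun p : Fin d × Fin d => if p.2 = j then x p.1 else 0) := by
      simp only [dotProduct, Matrix.mulVec, ptraceB, Matrix.of_apply, Pi.star_apply,
        Fintype.sum_prod_type, dotProduct]
      rw [Finset.sum_comm]
      refine Finset.sum_congr rfl fun j _ => ?_
      simp only [Finset.mul_sum, Finset.sum_mul]
      rw [Finset.sum_comm]
      refine Finset.sum_congr rfl fun i _ => ?_
      simp only [apply_ite star, star_zero, ite_mul, zero_mul, mul_ite, mul_zero,
        Fintype.sum_prod_type, Finset.sum_ite_eq', Finset.mem_univ, if_true]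
      symm
      rw [Finset.sum_comm]
      simp
    rw [key]
    exact Finset.sum_nonneg fun j _ => hM.dotProduct_mulVec_nonneg _

end PtraceHelpers

set_option maxHeartbeats 2000000 in
/-- **Partial-tracing an `h`-net of purifications gives an `ε`-covering of density matrices.**
Let `0 < ε < 1` and `h = √(1 − ε²)`.  If `P` is a finite set of unit vectors in
`ℂ^{d·d}` such that every unit vector `φ` has some `ψ ∈ P` with `|ψᴴ φ| ≥ h`, then
`D = {tr_B(ψψᴴ) : ψ ∈ P}` is an `ε`-covering set of density matrices in trace distance:
every PSD `σ` with `tr σ = 1` has some `ρ ∈ D` with `(1/2)‖ρ − σ‖₁ ≤ ε`; moreover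
`|D| ≤ |P|`. -/
theorem hnet_partial_trace_covering
    (d : ℕ) (hd : 1 ≤ d) (ε : ℝ) (hε0 : 0 < ε) (hε1 : ε < 1)
    (h : ℝ) (hh : h = Real.sqrt (1 - ε ^ 2))
    (P : Finset (Fin d × Fin d → ℂ))
    (hPunit : ∀ ψ ∈ P, star ψ ⬝ᵥ ψ = 1)
    (hPnet : ∀ φ : Fin d × Fin d → ℂ, star φ ⬝ᵥ φ = 1 →
      ∃ ψ ∈ P, h ≤ ‖star ψ ⬝ᵥ φ‖)
    (D : Finset (Matrix (Fin d) (Fin d) ℂ))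
    (hD : D = P.image fun ψ => ptraceB (Matrix.vecMulVec ψ (star ψ))) :
    (∀ σ : Matrix (Fin d) (Fin d) ℂ, σ.PosSemidef → σ.trace = 1 →
        ∃ ρ ∈ D, (1 / 2 : ℝ) * (ρ - σ).traceNorm ≤ ε) ∧
      D.card ≤ P.card := by
  constructor
  · intro σ hσ hσtr
    -- purification
    set φ : Fin d × Fin d → ℂ := fun p => hσ.sqrt p.1 p.2 with hφdef
    have hherm : hσ.sqrt.IsHermitian := hσ.posSemidef_sqrt.1
    have hmulσ : hσ.sqrt * hσ.sqrt = σ := hσ.sqrt_mul_self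
    have hφunit : star φ ⬝ᵥ φ = 1 := by
      have htr : (hσ.sqrt * hσ.sqrt).trace = star φ ⬝ᵥ φ := by
        simp only [Matrix.trace, Matrix.diag, Matrix.mul_apply, dotProduct,
          Fintype.sum_prod_type, Pi.star_apply, hφdef]
        refine Finset.sum_congr rfl fun i _ => Finset.sum_congr rfl fun j _ => ?_
        rw [← hherm.apply i j]
        simp [mul_comm]
      rw [← htr, hmulσ, hσtr]
    have hpur : ptraceB (vecMulVec φ (star φ)) = σ := by
      ext i i'
      simp only [ptraceB, Matrix.of_apply, vecMulVec_apply, Pi.star_apply, hφdef]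
      conv_rhs => rw [← hmulσ]
      rw [Matrix.mul_apply]
      refine Finset.sum_congr rfl fun j _ => ?_
      rw [hherm.apply j i']
    obtain ⟨ψ, hψP, hcnet⟩ := hPnet φ hφunit
    have hψunit : star ψ ⬝ᵥ ψ = 1 := hPunit ψ hψP
    set c : ℂ := star ψ ⬝ᵥ φ with hcdef
    set r : ℝ := ‖c‖ with hrdef
    have hr1 : r ≤ 1 := dot_abs_le_one ψ φ hψunit hφunit
    have hφψ : star φ ⬝ᵥ ψ = starRingEnd ℂ c := star_dot_comm φ ψ
    set Pψ : Matrix (Fin d × Fin d) (Fin d × Fin d) ℂ := vecMulVec ψ (star ψ) with hPψ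
    set Pφ : Matrix (Fin d × Fin d) (Fin d × Fin d) ℂ := vecMulVec φ (star φ) with hPφ
    set K : Matrix (Fin d × Fin d) (Fin d × Fin d) ℂ := vecMulVec ψ (star φ) with hK
    set L : Matrix (Fin d × Fin d) (Fin d × Fin d) ℂ := vecMulVec φ (star ψ) with hL
    set A : Matrix (Fin d × Fin d) (Fin d × Fin d) ℂ := Pψ - Pφ with hA
    have e1 : Pψ * Pψ = Pψ := by rw [hPψ, vmv_mul, hψunit, one_smul]
    have e2 : Pψ * Pφ = c • K := by rw [hPψ, hPφ, vmv_mul, ← hcdef, hK]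
    have e3 : Pφ * Pψ = (starRingEnd ℂ c) • L := by rw [hPφ, hPψ, vmv_mul, hφψ, hL]
    have e4 : Pφ * Pφ = Pφ := by rw [hPφ, vmv_mul, hφunit, one_smul]
    have e5 : K * Pψ = (starRingEnd ℂ c) • Pψ := by rw [hK, hPψ, vmv_mul, hφψ]
    have e6 : K * Pφ = K := by rw [hK, hPφ, vmv_mul, hφunit, one_smul]
    have e7 : L * Pψ = L := by rw [hL, hPψ, vmv_mul, hψunit, one_smul]
    have e8 : L * Pφ = c • Pφ := by rw [hL, hPφ, vmv_mul, ← hcdef]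
    have hcc : c * starRingEnd ℂ c = ((r^2 : ℝ) : ℂ) := by
      rw [Complex.mul_conj, ← Complex.sq_norm]
    have hcc' : starRingEnd ℂ c * c = ((r^2 : ℝ) : ℂ) := by rw [mul_comm]; exact hcc
    have hA2 : A * A = Pψ + Pφ - c • K - (starRingEnd ℂ c) • L := by
      rw [hA]
      simp only [sub_mul, mul_sub, e1, e2, e3, e4]
      abel
    have hA3 : A * A * A = (1 - ((r^2 : ℝ) : ℂ)) • A := by
      rw [hA2, hA]
      simp only [sub_mul, add_mul, mul_sub, smul_mul_assoc, e1, e2, e3, e4, e5, e6, e7, e8,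
        smul_smul, hcc, hcc']
      module
    -- membership of the candidate
    have hρD : ptraceB Pψ ∈ D := by
      rw [hD]
      exact Finset.mem_image_of_mem _ hψP
    refine ⟨ptraceB Pψ, hρD, ?_⟩
    rcases eq_or_lt_of_le hr1 with hr | hr
    · -- r = 1 : the states coincide
      have hA30 : A * A * A = 0 := by
        rw [hA3, hr]
        norm_num
      have hAh : A.IsHermitian := by
        rw [hA, hPψ, hPφ]
        exact (vmv_herm ψ).sub (vmv_herm φ)
      have hA2h : (A * A)ᴴ = A * A := by
        rw [Matrix.conjTranspose_mul, hAh.eq]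
      have h4 : (A * A)ᴴ * (A * A) = 0 := by
        rw [hA2h, ← Matrix.mul_assoc, hA30, Matrix.zero_mul]
      have hAA0 : A * A = 0 := Matrix.conjTranspose_mul_self_eq_zero.mp h4
      have hA0 : A = 0 := by
        have : Aᴴ * A = 0 := by rw [hAh.eq, hAA0]
        exact Matrix.conjTranspose_mul_self_eq_zero.mp this
      have hzero : ptraceB Pψ - σ = 0 := by
        rw [← hpur, ← ptraceB_sub, ← hA, hA0]
        ext i i'
        simp [ptraceB]
      rw [hzero, traceNorm_zero]
      linarith
    · -- r < 1
      set t : ℝ := Real.sqrt (1 - r^2) with htdef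
      have hr0 : 0 ≤ r := norm_nonneg c
      have ht0 : 0 < t := Real.sqrt_pos.mpr (by nlinarith)
      have htt : t^2 = 1 - r^2 := Real.sq_sqrt (by nlinarith)
      have hct : ((t : ℂ)) ≠ 0 := by exact_mod_cast ht0.ne'
      have hA3' : A * A * A = ((t:ℂ) * (t:ℂ)) • A := by
        rw [hA3]
        congr 1
        have : ((t:ℂ)) * (t:ℂ) = ((t^2 : ℝ) : ℂ) := by push_cast; ring
        rw [this, htt]
        push_cast
        ring
      have h4 : A * A * (A * A) = ((t:ℂ) * (t:ℂ)) • (A * A) := by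
        rw [← Matrix.mul_assoc, hA3', Matrix.smul_mul]
      have hA3'' : A * (A * A) = ((t:ℂ) * (t:ℂ)) • A := by
        rw [← Matrix.mul_assoc, hA3']
      set W : Matrix (Fin d × Fin d) (Fin d × Fin d) ℂ := A * A + (t:ℂ) • A with hW
      set V : Matrix (Fin d × Fin d) (Fin d × Fin d) ℂ := A * A - (t:ℂ) • A with hV
      have hAh : A.IsHermitian := by
        rw [hA, hPψ, hPφ]
        exact (vmv_herm ψ).sub (vmv_herm φ)
      have hA2herm : (A * A).IsHermitian := by
        unfold Matrix.IsHermitian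
        rw [Matrix.conjTranspose_mul, hAh.eq]
      have hWh : W.IsHermitian := by
        unfold Matrix.IsHermitian
        rw [hW, Matrix.conjTranspose_add, Matrix.conjTranspose_smul, hA2herm.eq, hAh.eq]
        congr 1
        simp [Complex.conj_ofReal]
      have hVh : V.IsHermitian := by
        unfold Matrix.IsHermitian
        rw [hV, Matrix.conjTranspose_sub, Matrix.conjTranspose_smul, hA2herm.eq, hAh.eq]
        congr 1
        simp [Complex.conj_ofReal]
      have hWsq : W * W = ((2 * t^2 : ℝ) : ℂ) • W := by
        rw [hW]
        simp only [add_mul, mul_add, smul_mul_assoc, mul_smul_comm, smul_smul, h4, hA3', hA3'']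
        have hcast : ((2 * t^2 : ℝ) : ℂ) = 2 * (t:ℂ) * (t:ℂ) := by push_cast; ring
        rw [hcast]
        module
      have hVsq : V * V = ((2 * t^2 : ℝ) : ℂ) • V := by
        rw [hV]
        simp only [sub_mul, mul_sub, smul_mul_assoc, mul_smul_comm, smul_smul, h4, hA3', hA3'']
        have hcast : ((2 * t^2 : ℝ) : ℂ) = 2 * (t:ℂ) * (t:ℂ) := by push_cast; ring
        rw [hcast]
        module
      set X : Matrix (Fin d × Fin d) (Fin d × Fin d) ℂ := ((2*t : ℝ) : ℂ)⁻¹ • W with hXdef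
      set Y : Matrix (Fin d × Fin d) (Fin d × Fin d) ℂ := ((2*t : ℝ) : ℂ)⁻¹ • V with hYdef
      have hXY : X - Y = A := by
        rw [hXdef, hYdef, ← smul_sub, hW, hV]
        have : A * A + (t:ℂ) • A - (A * A - (t:ℂ) • A) = ((2*t : ℝ) : ℂ) • A := by
          have hcast : ((2*t : ℝ) : ℂ) = 2 * (t:ℂ) := by push_cast; ring
          rw [hcast]
          module
        rw [this, smul_smul, inv_mul_cancel₀ (by exact_mod_cast (by positivity : (2*t : ℝ) ≠ 0)),
          one_smul]
      have hpsd_of : ∀ (Z : Matrix (Fin d × Fin d) (Fin d × Fin d) ℂ), Z.IsHermitian →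
          Z * Z = ((2 * t^2 : ℝ) : ℂ) • Z → (((2*t : ℝ) : ℂ)⁻¹ • Z).PosSemidef := by
        intro Z hZh hZsq
        have hZ : Z = (((2 * t^2)⁻¹ : ℝ) : ℂ) • (Zᴴ * Z) := by
          rw [hZh.eq, hZsq]
          rw [smul_smul]
          have : (((2 * t^2 : ℝ)⁻¹ : ℝ) : ℂ) * ((2 * t^2 : ℝ) : ℂ) = 1 := by
            rw [← Complex.ofReal_mul, inv_mul_cancel₀ (by positivity : (2 * t^2 : ℝ) ≠ 0)]
            simp
          rw [this, one_smul]
        have hfinal : ((2*t : ℝ) : ℂ)⁻¹ • Z = (((2*t : ℝ)⁻¹ * (2 * t^2 : ℝ)⁻¹ : ℝ) : ℂ) • (Zᴴ * Z) := by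
          conv_lhs => rw [hZ]
          rw [smul_smul]
          congr 1
          push_cast
          ring
        rw [hfinal]
        exact psd_smul_real (Matrix.posSemidef_conjTranspose_mul_self Z) (by positivity)
      have hXpsd : X.PosSemidef := hpsd_of W hWh hWsq
      have hYpsd : Y.PosSemidef := hpsd_of V hVh hVsq
      -- traces
      have htrA : A.trace = 0 := by
        rw [hA, Matrix.trace_sub, hPψ, hPφ, vmv_trace, vmv_trace, hψunit, hφunit, sub_self]
      have htrK : K.trace = starRingEnd ℂ c := by rw [hK, vmv_trace, hφψ]
      have htrL : L.trace = c := by rw [hL, vmv_trace, ← hcdef]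
      have htrA2 : (A * A).trace = ((2 * t^2 : ℝ) : ℂ) := by
        rw [hA2, Matrix.trace_sub, Matrix.trace_sub, Matrix.trace_add, Matrix.trace_smul,
          Matrix.trace_smul, htrK, htrL, hPψ, hPφ, vmv_trace, vmv_trace, hψunit, hφunit,
          smul_eq_mul, smul_eq_mul, hcc, hcc']
        have : ((2 * t^2 : ℝ) : ℂ) = 2 - 2 * ((r^2 : ℝ) : ℂ) := by
          rw [htt]; push_cast; ring
        rw [this]
        ring
      have htrW : W.trace = ((2 * t^2 : ℝ) : ℂ) := by
        rw [hW, Matrix.trace_add, Matrix.trace_smul, htrA, htrA2, smul_zero, add_zero]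
      have htrV : V.trace = ((2 * t^2 : ℝ) : ℂ) := by
        rw [hV, Matrix.trace_sub, Matrix.trace_smul, htrA, htrA2, smul_zero, sub_zero]
      have htrX : X.trace = ((t : ℝ) : ℂ) := by
        rw [hXdef, Matrix.trace_smul, htrW, smul_eq_mul, ← Complex.ofReal_inv,
          ← Complex.ofReal_mul]
        congr 1
        field_simp
      have htrY : Y.trace = ((t : ℝ) : ℂ) := by
        rw [hYdef, Matrix.trace_smul, htrV, smul_eq_mul, ← Complex.ofReal_inv,
          ← Complex.ofReal_mul]
        congr 1
        field_simp
      -- assemble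
      have hdiff : ptraceB Pψ - σ = ptraceB X - ptraceB Y := by
        rw [← hpur, ← ptraceB_sub, ← hA, ← hXY, ptraceB_sub]
      have hbound := traceNorm_sub_le_of_psd (ptraceB_posSemidef hXpsd) (ptraceB_posSemidef hYpsd)
      rw [ptraceB_trace, ptraceB_trace, htrX, htrY] at hbound
      simp only [Complex.ofReal_re] at hbound
      rw [hdiff]
      have htle : t ≤ ε := by
        have hh0 : 0 ≤ h := by rw [hh]; positivity
        have hh2 : h^2 = 1 - ε^2 := by
          rw [hh]
          exact Real.sq_sqrt (by nlinarith)
        have hhr2 : h^2 ≤ r^2 := by nlinarith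
        have : 1 - r^2 ≤ ε^2 := by nlinarith
        calc t = Real.sqrt (1 - r^2) := htdef
          _ ≤ Real.sqrt (ε^2) := Real.sqrt_le_sqrt this
          _ = ε := by rw [Real.sqrt_sq hε0.le]
      linarith
  · rw [hD]
    exact Finset.card_image_le
end
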